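/- Let G be an abelian lattice-ordered group, u > 0, and x_1, …, x_n elements of [0,u]. Then the condition '(u - x_i) ∧ (x_{i+1} + ⋯ + x_n) = 0 for all 1 ≤ i ≤ n-1' is equivalent to '(u - x_i) ∧ x_{i+1} = 0 for all 1 ≤ i ≤ n-1'. Moreover, if these conditions hold then (u - x_i) ∧ x_j = 0 for all 1 ≤ i < j ≤ n. -/
import Mathlib

section Aux
variable {G : Type*} [Lattice G] [AddCommGroup G]
    [CovariantClass G G (· + ·) (· ≤ ·)]

lemma aux_sum_nonneg {ι : Type*} (s : Finset ι) (f : ι → G)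
    (hf : ∀ j ∈ s, 0 ≤ f j) : (0 : G) ≤ ∑ j ∈ s, f j := by
  induction s using Finset.cons_induction with
  | empty => simp
  | cons j s hj ih =>
    rw [Finset.sum_cons]
    exact add_nonneg (hf j (Finset.mem_cons_self j s))
      (ih fun k hk => hf k (Finset.mem_cons_of_mem hk))

lemma aux_single_le_sum {ι : Type*} [DecidableEq ι] (s : Finset ι) (f : ι → G)
    (hf : ∀ j ∈ s, 0 ≤ f j) {j : ι} (hj : j ∈ s) : f j ≤ ∑ k ∈ s, f k := by
  rw [← Finset.add_sum_erase s f hj]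
  exact le_add_of_nonneg_right
    (aux_sum_nonneg _ _ fun k hk => hf k (Finset.mem_of_mem_erase hk))

lemma aux_add3 {a b c : G} (ha : 0 ≤ a) (hb : 0 ≤ b) (hc : 0 ≤ c)
    (hab : a ⊓ b = 0) (hac : a ⊓ c = 0) : a ⊓ (b + c) = 0 := by
  apply le_antisymm
  · have h1 : a ⊓ (b + c) - b ≤ a := le_trans (sub_le_self _ hb) inf_le_left
    have h2 : a ⊓ (b + c) - b ≤ c := sub_le_iff_le_add'.mpr inf_le_right
    have h3 : a ⊓ (b + c) - b ≤ 0 := hac ▸ le_inf h1 h2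
    have hle : a ⊓ (b + c) ≤ b := sub_nonpos.mp h3
    exact hab ▸ le_inf inf_le_left hle
  · exact le_inf ha (add_nonneg hb hc)

lemma aux_sum3 {a : G} (ha : 0 ≤ a) {ι : Type*} (s : Finset ι) (f : ι → G)
    (hf : ∀ j ∈ s, 0 ≤ f j) (h : ∀ j ∈ s, a ⊓ f j = 0) : a ⊓ ∑ j ∈ s, f j = 0 := by
  induction s using Finset.cons_induction with
  | empty => simpa using inf_of_le_right ha
  | cons j s hj ih =>
    rw [Finset.sum_cons]
    exact aux_add3 ha (hf j (Finset.mem_cons_self j s))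
      (aux_sum_nonneg s f fun k hk => hf k (Finset.mem_cons_of_mem hk))
      (h j (Finset.mem_cons_self j s))
      (ih (fun k hk => hf k (Finset.mem_cons_of_mem hk))
          (fun k hk => h k (Finset.mem_cons_of_mem hk)))

lemma aux_chain3 {u a b c : G} (ha0 : 0 ≤ a) (hau : a ≤ u) (hb0 : 0 ≤ b) (hbu : b ≤ u)
    (hc0 : 0 ≤ c) (hab : a ⊓ b = 0) (hbc : (u - b) ⊓ c = 0) : a ⊓ c = 0 := by
  set e := a ⊓ c with he
  have he0 : 0 ≤ e := le_inf ha0 hc0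
  have h1 : e ⊓ b = 0 :=
    le_antisymm (hab ▸ inf_le_inf_right b inf_le_left) (le_inf he0 hb0)
  have h2 : e ⊓ (u - b) = 0 := by
    apply le_antisymm _ (le_inf he0 (sub_nonneg.mpr hbu))
    calc e ⊓ (u - b) ≤ c ⊓ (u - b) := inf_le_inf_right _ inf_le_right
      _ = (u - b) ⊓ c := inf_comm _ _
      _ = 0 := hbc
  have h3 : e ⊓ (b + (u - b)) = 0 :=
    aux_add3 he0 hb0 (sub_nonneg.mpr hbu) h1 h2
  have hbb : b + (u - b) = u := by abel
  rw [hbb] at h3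
  have heu : e ≤ u := le_trans inf_le_left hau
  calc e = e ⊓ u := (inf_of_le_left heu).symm
    _ = 0 := h3

end Aux

/-- Equivalence of the two formulations of the good-sequence condition, and its
consequence `(u - x_i) ⊓ x_j = 0` for `i < j`. -/
theorem stmt3 {G : Type*} [Lattice G] [AddCommGroup G]
    [CovariantClass G G (· + ·) (· ≤ ·)]
    (u : G) (hu : 0 < u) (n : ℕ) (x : Fin n → G)
    (hx : ∀ i, x i ∈ Set.Icc (0 : G) u) :
    ((∀ i : Fin n, ∀ h : (i : ℕ) + 1 < n,
        (u - x i) ⊓ (∑ j ∈ Finset.Ioi i, x j) = 0) ↔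
      (∀ i : Fin n, ∀ h : (i : ℕ) + 1 < n,
        (u - x i) ⊓ x ⟨(i : ℕ) + 1, h⟩ = 0)) ∧
    ((∀ i : Fin n, ∀ h : (i : ℕ) + 1 < n,
        (u - x i) ⊓ x ⟨(i : ℕ) + 1, h⟩ = 0) →
      ∀ i j : Fin n, i < j → (u - x i) ⊓ x j = 0) := by
  have hx0 : ∀ i, 0 ≤ x i := fun i => (hx i).1
  have hxu : ∀ i, x i ≤ u := fun i => (hx i).2
  have ha0 : ∀ i, 0 ≤ u - x i := fun i => sub_nonneg.mpr (hxu i)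
  have hau : ∀ i, u - x i ≤ u := fun i => sub_le_self _ (hx0 i)
  have part2 : (∀ i : Fin n, ∀ h : (i : ℕ) + 1 < n,
        (u - x i) ⊓ x ⟨(i : ℕ) + 1, h⟩ = 0) →
      ∀ i j : Fin n, i < j → (u - x i) ⊓ x j = 0 := by
    intro hadj i j hij
    obtain ⟨m, hm⟩ : ∃ m, (j : ℕ) = (i : ℕ) + m + 1 :=
      ⟨(j : ℕ) - (i : ℕ) - 1, by omega⟩
    clear hij
    induction m generalizing j with
    | zero =>
      have hj : j = ⟨(i : ℕ) + 1, by omega⟩ := Fin.ext (by simpa using hm)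
      rw [hj]
      exact hadj i (by omega)
    | succ m ih =>
      have hj'lt : (i : ℕ) + m + 1 < n := by omega
      set j' : Fin n := ⟨(i : ℕ) + m + 1, hj'lt⟩ with hj'
      have hij' : (u - x i) ⊓ x j' = 0 := ih j' rfl
      have hstep : (u - x j') ⊓ x j = 0 := by
        have hj : j = ⟨(j' : ℕ) + 1, by simp [hj']; omega⟩ := Fin.ext (by simp [hj']; omega)
        rw [hj]
        exact hadj j' (by simp [hj']; omega)
      exact aux_chain3 (ha0 i) (hau i) (hx0 j') (hxu j') (hx0 j) hij' hstep
  refine ⟨⟨?_, ?_⟩, part2⟩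
  · intro hsum i h
    set j : Fin n := ⟨(i : ℕ) + 1, h⟩ with hjdef
    have hj : j ∈ Finset.Ioi i := by
      simp [Finset.mem_Ioi, hjdef, Fin.lt_def]
    apply le_antisymm
    · calc (u - x i) ⊓ x j ≤ (u - x i) ⊓ ∑ k ∈ Finset.Ioi i, x k :=
          inf_le_inf_left _ (aux_single_le_sum _ x (fun k _ => hx0 k) hj)
        _ = 0 := hsum i h
    · exact le_inf (ha0 i) (hx0 j)
  · intro hadj i h
    exact aux_sum3 (ha0 i) _ _ (fun k _ => hx0 k)
      (fun k hk => part2 hadj i k (Finset.mem_Ioi.mp hk))
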